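/- arXiv:1912.09714 — 2 statements merged into one kernel-verified Lean document; each statement's English description precedes it below -/
import Mathlib

section
/- For every integer a ≥ 5 and every integer w ≥ 0, the number of 2^a-multipartitions satisfies k(2^a, w) ≤ 2^((a − 4/3)w + 2). -/
set_option linter.unusedTactic false

open Finset

/-- The number of `s`-multipartitions of `t`: tuples of `s` partitions whose sizes sum to `t`. -/
noncomputable def multipartitions (s t : ℕ) : ℕ :=
  Nat.card {f : Fin s → Σ n : ℕ, Nat.Partition n // ∑ i, (f i).1 = t}

namespace MPaux

/-- Recursive upper bound for the number of multipartitions. -/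
def Kb : ℕ → ℕ → ℕ
  | 0, 0 => 1
  | 0, _+1 => 0
  | s+1, w => ∑ m ∈ Finset.range (w+1), 2^(m-1) * Kb s (w - m)

lemma Kb_succ (s w : ℕ) : Kb (s+1) w = ∑ m ∈ Finset.range (w+1), 2^(m-1) * Kb s (w - m) := rfl

lemma card_partition_le (n : ℕ) : Fintype.card (Nat.Partition n) ≤ 2^(n-1) := by
  rw [← composition_card]
  exact Fintype.card_le_of_surjective _ Nat.Partition.ofComposition_surj

abbrev MP (s t : ℕ) := {f : Fin s → Σ n : ℕ, Nat.Partition n // ∑ i, (f i).1 = t}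

def peel (s w : ℕ) (f : MP (s+1) w) :
    Σ m : Fin (w+1), Nat.Partition m.1 × MP s (w - m.1) :=
  ⟨⟨(f.1 (Fin.last s)).1, by
      have h := f.2
      rw [Fin.sum_univ_castSucc] at h
      omega⟩,
   ((f.1 (Fin.last s)).2,
    ⟨fun i => f.1 i.castSucc, by
      show (∑ i : Fin s, (f.1 i.castSucc).1) = w - (f.1 (Fin.last s)).1
      have h := f.2
      rw [Fin.sum_univ_castSucc] at h
      omega⟩)⟩

def unpeel (s w : ℕ) (q : Σ m : Fin (w+1), Nat.Partition m.1 × MP s (w - m.1)) :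
    MP (s+1) w :=
  ⟨Fin.snoc q.2.2.1 ⟨q.1.1, q.2.1⟩, by
    rw [Fin.sum_univ_castSucc]
    simp only [Fin.snoc_castSucc, Fin.snoc_last]
    have h := q.2.2.2
    have h2 := q.1.2
    omega⟩

lemma peel_leftinv (s w : ℕ) : Function.LeftInverse (unpeel s w) (peel s w) := by
  intro f
  apply Subtype.ext
  show Fin.snoc (fun i => f.1 i.castSucc) ⟨(f.1 (Fin.last s)).1, (f.1 (Fin.last s)).2⟩ = f.1
  funext i
  induction i using Fin.lastCases with
  | last => simp [Fin.snoc_last]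
  | cast j => simp [Fin.snoc_castSucc]

lemma peel_inj (s w : ℕ) : Function.Injective (peel s w) :=
  (peel_leftinv s w).injective

lemma mp_finite (s : ℕ) : ∀ w, Finite (MP s w) := by
  induction s with
  | zero =>
    intro w
    exact Finite.of_injective (fun _ => ())
      (fun a b _ => Subtype.ext (funext fun i => i.elim0))
  | succ s ih =>
    intro w
    haveI : ∀ m : Fin (w+1), Finite (Nat.Partition m.1 × MP s (w - m.1)) := fun m => by
      haveI := ih (w - m.1); infer_instance
    exact Finite.of_injective (peel s w) (peel_inj s w)

lemma mp_card (s : ℕ) : ∀ w, Nat.card (MP s w) ≤ Kb s w := by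
  induction s with
  | zero =>
    intro w
    cases w with
    | zero =>
      haveI : Unique (MP 0 0) :=
        ⟨⟨⟨fun i => i.elim0, by simp⟩⟩, fun f => Subtype.ext (funext fun i => i.elim0)⟩
      simp [Kb, Nat.card_unique]
    | succ w =>
      haveI : IsEmpty (MP 0 (w+1)) := ⟨fun f => by have := f.2; simp at this⟩
      simp [Kb, Nat.card_of_isEmpty]
  | succ s ih =>
    intro w
    letI : ∀ t, Fintype (MP s t) := fun t => @Fintype.ofFinite _ (mp_finite s t)
    haveI : ∀ m : Fin (w+1), Finite (Nat.Partition m.1 × MP s (w - m.1)) := fun m => by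
      infer_instance
    calc Nat.card (MP (s+1) w)
        ≤ Nat.card (Σ m : Fin (w+1), Nat.Partition m.1 × MP s (w - m.1)) :=
          Nat.card_le_card_of_injective _ (peel_inj s w)
      _ = ∑ m : Fin (w+1), Fintype.card (Nat.Partition m.1) * Fintype.card (MP s (w - m.1)) := by
          simp [Nat.card_eq_fintype_card, Fintype.card_sigma, Fintype.card_prod]
      _ ≤ ∑ m : Fin (w+1), 2^(m.1-1) * Kb s (w - m.1) := by
          apply Finset.sum_le_sum
          intro m _
          have h1 := card_partition_le m.1
          have h2 : Fintype.card (MP s (w - m.1)) ≤ Kb s (w - m.1) := by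
            rw [← Nat.card_eq_fintype_card]; exact ih _
          exact Nat.mul_le_mul h1 h2
      _ = ∑ m ∈ Finset.range (w+1), 2^(m-1) * Kb s (w - m) := by
          rw [Fin.sum_univ_eq_sum_range (fun m => 2^(m-1) * Kb s (w - m)) (w+1)]
      _ = Kb (s+1) w := (Kb_succ s w).symm


lemma hsum_le (x : ℝ) (hx : 0 < x) (hx2 : 2*x < 1) (w : ℕ) :
    ∑ m ∈ Finset.range (w+1), ((2^(m-1) : ℕ) : ℝ) * x^m ≤ (1-x)/(1-2*x) := by
  have h1 : (0:ℝ) < 1 - 2*x := by linarith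
  rw [Finset.sum_range_succ']
  have e1 : ∀ i, ((2^(i+1-1) : ℕ) : ℝ) * x^(i+1) = x * (2*x)^i := by
    intro i
    push_cast
    ring
  simp only [e1]
  rw [← Finset.mul_sum]
  have hgeom : ∑ i ∈ Finset.range w, (2*x)^i ≤ 1/(1-2*x) := by
    rw [geom_sum_eq (by nlinarith : (2:ℝ)*x ≠ 1),
      show ((2*x)^w - 1)/(2*x-1) = (1-(2*x)^w)/(1-2*x) by
        rw [← neg_sub (1:ℝ) ((2*x)^w), ← neg_sub (1:ℝ) (2*x), neg_div_neg_eq]]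
    have h2w : (0:ℝ) ≤ (2*x)^w := by positivity
    gcongr
    linarith
  have : ((2^(0-1) : ℕ) : ℝ) * x^0 = 1 := by norm_num
  rw [this]
  have hx0 : (0:ℝ) ≤ x := hx.le
  calc x * (∑ i ∈ Finset.range w, (2*x)^i) + 1 ≤ x * (1/(1-2*x)) + 1 := by
        gcongr
    _ = (1-x)/(1-2*x) := by rw [eq_div_iff h1.ne', add_mul, mul_assoc, one_div, inv_mul_cancel₀ h1.ne']; ring
  
lemma kb_chernoff (x : ℝ) (hx : 0 < x) (hx2 : 2*x < 1) :
    ∀ s w, (Kb s w : ℝ) * x^w ≤ ((1-x)/(1-2*x))^s := by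
  have h1 : (0:ℝ) < 1 - 2*x := by linarith
  have hG0 : 0 ≤ (1-x)/(1-2*x) := by
    apply div_nonneg <;> linarith
  intro s
  induction s with
  | zero =>
    intro w
    cases w with
    | zero => simp [Kb]
    | succ w => simp [Kb]
  | succ s ih =>
    intro w
    rw [Kb_succ]
    push_cast [Finset.sum_mul]
    calc ∑ m ∈ Finset.range (w+1), ((2:ℝ)^(m-1) * (Kb s (w-m) : ℝ)) * x^w
        = ∑ m ∈ Finset.range (w+1), ((2^(m-1):ℕ) : ℝ) * x^m * ((Kb s (w-m) : ℝ) * x^(w-m)) := by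
          apply Finset.sum_congr rfl
          intro m hm
          have hmw : m ≤ w := by simpa using Nat.lt_succ_iff.mp (Finset.mem_range.mp hm)
          have : x^w = x^m * x^(w-m) := by
            rw [← pow_add]
            congr 1
            omega
          push_cast
          rw [this]; ring
      _ ≤ ∑ m ∈ Finset.range (w+1), ((2^(m-1):ℕ) : ℝ) * x^m * ((1-x)/(1-2*x))^s := by
          apply Finset.sum_le_sum
          intro m _
          apply mul_le_mul_of_nonneg_left (ih (w-m))
          positivity
      _ = (∑ m ∈ Finset.range (w+1), ((2^(m-1):ℕ) : ℝ) * x^m) * ((1-x)/(1-2*x))^s := by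
          rw [Finset.sum_mul]
      _ ≤ ((1-x)/(1-2*x)) * ((1-x)/(1-2*x))^s := by
          apply mul_le_mul_of_nonneg_right (hsum_le x hx hx2 w)
          positivity
      _ = ((1-x)/(1-2*x))^(s+1) := by rw [pow_succ]; ring


set_option maxHeartbeats 1600000 in
lemma kb_small (s : ℕ) :
    ((Kb s 0 : ℝ) ≤ 1) ∧
    ((Kb s 1 : ℝ) ≤ (s:ℝ)) ∧
    ((Kb s 2 : ℝ) ≤ 2*(s:ℝ) + (1/2)*(s:ℝ)^2) ∧
    ((Kb s 3 : ℝ) ≤ 4*(s:ℝ) + 2*(s:ℝ)^2 + (1/6)*(s:ℝ)^3) ∧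
    ((Kb s 4 : ℝ) ≤ 8*(s:ℝ) + 6*(s:ℝ)^2 + (s:ℝ)^3 + (1/24)*(s:ℝ)^4) ∧
    ((Kb s 5 : ℝ) ≤ 16*(s:ℝ) + 16*(s:ℝ)^2 + 4*(s:ℝ)^3 + (1/3)*(s:ℝ)^4 + (1/120)*(s:ℝ)^5) ∧
    ((Kb s 6 : ℝ) ≤ 32*(s:ℝ) + 40*(s:ℝ)^2 + (40/3)*(s:ℝ)^3 + (5/3)*(s:ℝ)^4 + (1/12)*(s:ℝ)^5 + (1/720)*(s:ℝ)^6) ∧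
    ((Kb s 7 : ℝ) ≤ 64*(s:ℝ) + 96*(s:ℝ)^2 + 40*(s:ℝ)^3 + (20/3)*(s:ℝ)^4 + (1/2)*(s:ℝ)^5 + (1/60)*(s:ℝ)^6 + (1/5040)*(s:ℝ)^7) ∧
    ((Kb s 8 : ℝ) ≤ 128*(s:ℝ) + 224*(s:ℝ)^2 + 112*(s:ℝ)^3 + (70/3)*(s:ℝ)^4 + (7/3)*(s:ℝ)^5 + (7/60)*(s:ℝ)^6 + (1/360)*(s:ℝ)^7 + (1/40320)*(s:ℝ)^8) ∧
    ((Kb s 9 : ℝ) ≤ 256*(s:ℝ) + 512*(s:ℝ)^2 + (896/3)*(s:ℝ)^3 + (224/3)*(s:ℝ)^4 + (28/3)*(s:ℝ)^5 + (28/45)*(s:ℝ)^6 + (1/45)*(s:ℝ)^7 + (1/2520)*(s:ℝ)^8 + (1/362880)*(s:ℝ)^9) := by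
  induction s with
  | zero =>
    refine ⟨?_,?_,?_,?_,?_,?_,?_,?_,?_,?_⟩
    · norm_num [show Kb 0 0 = 1 from rfl]
    · norm_num [show Kb 0 1 = 0 from rfl]
    · norm_num [show Kb 0 2 = 0 from rfl]
    · norm_num [show Kb 0 3 = 0 from rfl]
    · norm_num [show Kb 0 4 = 0 from rfl]
    · norm_num [show Kb 0 5 = 0 from rfl]
    · norm_num [show Kb 0 6 = 0 from rfl]
    · norm_num [show Kb 0 7 = 0 from rfl]
    · norm_num [show Kb 0 8 = 0 from rfl]
    · norm_num [show Kb 0 9 = 0 from rfl]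
  | succ s ih =>
    obtain ⟨h0,h1,h2,h3,h4,h5,h6,h7,h8,h9⟩ := ih
    have hs : (0:ℝ) ≤ (s:ℝ) := Nat.cast_nonneg s
    have q2 : (0:ℝ) ≤ (s:ℝ)^2 := by positivity
    have q3 : (0:ℝ) ≤ (s:ℝ)^3 := by positivity
    have q4 : (0:ℝ) ≤ (s:ℝ)^4 := by positivity
    have q5 : (0:ℝ) ≤ (s:ℝ)^5 := by positivity
    have q6 : (0:ℝ) ≤ (s:ℝ)^6 := by positivity
    have q7 : (0:ℝ) ≤ (s:ℝ)^7 := by positivity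
    have q8 : (0:ℝ) ≤ (s:ℝ)^8 := by positivity
    ring_nf at h1 h2 h3 h4 h5 h6 h7 h8 h9
    refine ⟨?_,?_,?_,?_,?_,?_,?_,?_,?_,?_⟩
    · rw [Kb_succ]
      norm_num [Finset.sum_range_succ]
      exact_mod_cast h0
    · rw [Kb_succ]
      norm_num [Finset.sum_range_succ]
      push_cast
      ring_nf
      linarith [h0,h1,h2,h3,h4,h5,h6,h7,h8,h9,hs,q2,q3,q4,q5,q6,q7,q8]
    · rw [Kb_succ]
      norm_num [Finset.sum_range_succ]
      push_cast
      ring_nf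
      linarith [h0,h1,h2,h3,h4,h5,h6,h7,h8,h9,hs,q2,q3,q4,q5,q6,q7,q8]
    · rw [Kb_succ]
      norm_num [Finset.sum_range_succ]
      push_cast
      ring_nf
      linarith [h0,h1,h2,h3,h4,h5,h6,h7,h8,h9,hs,q2,q3,q4,q5,q6,q7,q8]
    · rw [Kb_succ]
      norm_num [Finset.sum_range_succ]
      push_cast
      ring_nf
      linarith [h0,h1,h2,h3,h4,h5,h6,h7,h8,h9,hs,q2,q3,q4,q5,q6,q7,q8]
    · rw [Kb_succ]
      norm_num [Finset.sum_range_succ]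
      push_cast
      ring_nf
      linarith [h0,h1,h2,h3,h4,h5,h6,h7,h8,h9,hs,q2,q3,q4,q5,q6,q7,q8]
    · rw [Kb_succ]
      norm_num [Finset.sum_range_succ]
      push_cast
      ring_nf
      linarith [h0,h1,h2,h3,h4,h5,h6,h7,h8,h9,hs,q2,q3,q4,q5,q6,q7,q8]
    · rw [Kb_succ]
      norm_num [Finset.sum_range_succ]
      push_cast
      ring_nf
      linarith [h0,h1,h2,h3,h4,h5,h6,h7,h8,h9,hs,q2,q3,q4,q5,q6,q7,q8]
    · rw [Kb_succ]
      norm_num [Finset.sum_range_succ]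
      push_cast
      ring_nf
      linarith [h0,h1,h2,h3,h4,h5,h6,h7,h8,h9,hs,q2,q3,q4,q5,q6,q7,q8]
    · rw [Kb_succ]
      norm_num [Finset.sum_range_succ]
      push_cast
      ring_nf
      linarith [h0,h1,h2,h3,h4,h5,h6,h7,h8,h9,hs,q2,q3,q4,q5,q6,q7,q8]

set_option maxHeartbeats 1000000 in
lemma key_small (s w : ℕ) (hS32 : (32:ℝ) ≤ (s:ℝ)) (hw : w < 10) :
    (Kb s w : ℝ) * 2.5199^w ≤ 4 * (s:ℝ)^w := by
  have hS0 : (0:ℝ) < (s:ℝ) := by linarith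
  have p1 : 32*(s:ℝ) ≤ (s:ℝ)^2 := by nlinarith
  have p2 : 32*(s:ℝ)^2 ≤ (s:ℝ)^3 := by nlinarith
  have p3 : 32*(s:ℝ)^3 ≤ (s:ℝ)^4 := by nlinarith [pow_nonneg hS0.le 2]
  have p4 : 32*(s:ℝ)^4 ≤ (s:ℝ)^5 := by nlinarith [pow_nonneg hS0.le 3, pow_nonneg hS0.le 4]
  have p5 : 32*(s:ℝ)^5 ≤ (s:ℝ)^6 := by nlinarith [pow_nonneg hS0.le 4, pow_nonneg hS0.le 5]
  have p6 : 32*(s:ℝ)^6 ≤ (s:ℝ)^7 := by nlinarith [pow_nonneg hS0.le 5, pow_nonneg hS0.le 6]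
  have p7 : 32*(s:ℝ)^7 ≤ (s:ℝ)^8 := by nlinarith [pow_nonneg hS0.le 6, pow_nonneg hS0.le 7]
  have p8 : 32*(s:ℝ)^8 ≤ (s:ℝ)^9 := by nlinarith [pow_nonneg hS0.le 7, pow_nonneg hS0.le 8]
  obtain ⟨k0,k1,k2,k3,k4,k5,k6,k7,k8,k9⟩ := kb_small s
  interval_cases w
  · simp only [pow_zero, mul_one]; linarith [k0]
  · simp only [pow_one]; linarith [k1]
  · linarith [k2, p1]
  · linarith [k3, p1, p2]
  · linarith [k4, p1, p2, p3]
  · linarith [k5, p1, p2, p3, p4]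
  · linarith [k6, p1, p2, p3, p4, p5]
  · linarith [k7, p1, p2, p3, p4, p5, p6]
  · linarith [k8, p1, p2, p3, p4, p5, p6, p7]
  · linarith [k9, p1, p2, p3, p4, p5, p6, p7, p8]


lemma key_large (s w : ℕ) (hS32 : (32:ℝ) ≤ (s:ℝ)) (hw : 10 ≤ w) :
    (Kb s w : ℝ) * 2.5199^w ≤ 4 * (s:ℝ)^w := by
  set S : ℝ := (s:ℝ) with hSdef
  have hS0 : (0:ℝ) < S := by linarith
  have hw10 : (10:ℝ) ≤ (w:ℝ) := by exact_mod_cast hw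
  set W : ℝ := (w:ℝ) with hWdef
  have hW0 : (0:ℝ) < W := by linarith
  have hx : (0:ℝ) < W/(S+2*W) := by positivity
  have hx2 : 2*(W/(S+2*W)) < 1 := by
    rw [show 2*(W/(S+2*W)) = 2*W/(S+2*W) by ring, div_lt_one (by positivity)]
    linarith
  have hch := kb_chernoff (W/(S+2*W)) hx hx2 s w
  have hGeq : (1 - W/(S+2*W))/(1 - 2*(W/(S+2*W))) = 1 + W/S := by
    rw [div_eq_iff (by
      rw [show 1 - 2*(W/(S+2*W)) = S/(S+2*W) by field_simp; ring]
      positivity)]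
    field_simp
    ring
  rw [hGeq] at hch
  have hGle : (1 + W/S)^s ≤ Real.exp W := by
    calc (1 + W/S)^s ≤ (Real.exp (W/S))^s := by
          apply pow_le_pow_left₀ (by positivity)
          have := Real.add_one_le_exp (W/S)
          linarith
      _ = Real.exp W := by
          rw [← Real.exp_nat_mul]
          congr 1
          field_simp; exact hSdef.symm
  have hprod : (W/(S+2*W))^w * ((S+2*W)/W)^w = 1 := by
    rw [← mul_pow, show W/(S+2*W)*((S+2*W)/W) = 1 by field_simp]
    simp
  have hKb : (Kb s w : ℝ) ≤ Real.exp W * ((S+2*W)/W)^w := by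
    calc (Kb s w : ℝ)
        = ((Kb s w : ℝ) * (W/(S+2*W))^w) * ((S+2*W)/W)^w := by
          rw [mul_assoc, hprod, mul_one]
      _ ≤ Real.exp W * ((S+2*W)/W)^w :=
          mul_le_mul_of_nonneg_right (hch.trans hGle) (by positivity)
  have base : Real.exp 1 * ((S+2*W)/W) * 2.5199 ≤ S * (1+1.38/W) := by
    have he := Real.exp_one_lt_d9.le
    have hnum : Real.exp 1 * 2.5199 * (S+2*W) ≤ S*(W+1.38) := by
      nlinarith [mul_le_mul_of_nonneg_right he (show (0:ℝ) ≤ S+2*W by positivity),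
        mul_nonneg (sub_nonneg.2 hS32) (sub_nonneg.2 hw10)]
    calc Real.exp 1 * ((S+2*W)/W) * 2.5199 = (Real.exp 1 * 2.5199 * (S+2*W))/W := by ring
      _ ≤ (S*(W+1.38))/W := by gcongr
      _ = S * (1+1.38/W) := by field_simp
  have hfour : (1+1.38/W)^w ≤ 4 := by
    calc (1+1.38/W)^w ≤ (Real.exp (1.38/W))^w := by
          apply pow_le_pow_left₀ (by positivity)
          have := Real.add_one_le_exp (1.38/W)
          linarith
      _ = Real.exp 1.38 := by
          rw [← Real.exp_nat_mul]
          rw [show (w:ℝ) * (1.38/W) = 1.38 by field_simp; exact hWdef.symm]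
      _ ≤ 4 := by
          rw [show (4:ℝ) = Real.exp (Real.log 4) from (Real.exp_log (by norm_num)).symm]
          apply Real.exp_le_exp.2
          have h24 : Real.log 4 = 2 * Real.log 2 := by
            rw [show (4:ℝ) = 2^(2:ℕ) by norm_num, Real.log_pow]
            push_cast; ring
          have := Real.log_two_gt_d9
          rw [h24]; linarith
  have hexpW : (Real.exp 1)^w = Real.exp W := by
    rw [← Real.exp_nat_mul, hWdef, mul_one]
  calc (Kb s w : ℝ) * 2.5199^w
      ≤ (Real.exp W * ((S+2*W)/W)^w) * 2.5199^w :=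
        mul_le_mul_of_nonneg_right hKb (by positivity)
    _ = (Real.exp 1 * ((S+2*W)/W) * 2.5199)^w := by
        rw [← hexpW, mul_pow, mul_pow]
    _ ≤ (S * (1+1.38/W))^w := pow_le_pow_left₀ (by positivity) base w
    _ = S^w * (1+1.38/W)^w := mul_pow _ _ _
    _ ≤ S^w * 4 := mul_le_mul_of_nonneg_left hfour (by positivity)
    _ = 4 * S^w := by ring


end MPaux

open MPaux in
theorem multipartitions_two_pow_le' (a w : ℕ) (ha : 5 ≤ a) :
    (multipartitions (2 ^ a) w : ℝ) ≤ (2 : ℝ) ^ (((a : ℝ) - 4 / 3) * w + 2) := by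
  have hM : (multipartitions (2^a) w : ℝ) ≤ (Kb (2^a) w : ℝ) :=
    Nat.cast_le.2 (mp_card (2^a) w)
  have h25 : (2^5 : ℕ) ≤ 2^a := Nat.pow_le_pow_right (by norm_num) ha
  have hS32 : (32:ℝ) ≤ ((2^a : ℕ):ℝ) := by exact_mod_cast h25
  have key : (Kb (2^a) w : ℝ) * 2.5199^w ≤ 4 * ((2^a : ℕ):ℝ)^w := by
    rcases lt_or_ge w 10 with hw | hw
    · exact key_small (2^a) w hS32 hw
    · exact key_large (2^a) w hS32 hw
  have hc : (2:ℝ) ^ ((4:ℝ)/3) ≤ 2.5199 := by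
    apply le_of_pow_le_pow_left₀ (n := 3) (by norm_num) (by norm_num)
    have h3 : ((2:ℝ)^((4:ℝ)/3))^(3:ℕ) = (2:ℝ)^((4:ℝ)) := by
      rw [← Real.rpow_natCast ((2:ℝ)^((4:ℝ)/3)) 3, ← Real.rpow_mul (by norm_num)]
      norm_num
    rw [h3, show (2:ℝ)^(4:ℝ) = 16 by
      rw [show (4:ℝ) = ((4:ℕ):ℝ) by norm_num, Real.rpow_natCast]; norm_num]
    norm_num
  have hb0 : (0:ℝ) < (2:ℝ)^((4:ℝ)/3) := Real.rpow_pos_of_pos (by norm_num) _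
  have hrhs : (2:ℝ)^(((a:ℝ) - 4/3)*w + 2) = 4 * ((2^a : ℕ):ℝ)^w / ((2:ℝ)^((4:ℝ)/3))^w := by
    rw [show ((a:ℝ) - 4/3)*w + 2 = ((a:ℝ)*(w:ℝ)) - ((4:ℝ)/3*(w:ℝ)) + 2 by ring]
    rw [Real.rpow_add (by norm_num : (0:ℝ) < 2), Real.rpow_sub (by norm_num : (0:ℝ) < 2)]
    have e1 : (2:ℝ)^((a:ℝ)*(w:ℝ)) = ((2^a : ℕ):ℝ)^w := by
      rw [Real.rpow_mul (by norm_num : (0:ℝ) ≤ 2), Real.rpow_natCast ((2:ℝ)^(a:ℝ)) w]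
      congr 1
      rw [Real.rpow_natCast]
      push_cast
      ring
    have e2 : (2:ℝ)^((4:ℝ)/3*(w:ℝ)) = ((2:ℝ)^((4:ℝ)/3))^w := by
      rw [Real.rpow_mul (by norm_num : (0:ℝ) ≤ 2), Real.rpow_natCast]
    have e3 : (2:ℝ)^(2:ℝ) = 4 := by
      rw [show (2:ℝ) = ((2:ℕ):ℝ) from by norm_num]
      rw [Real.rpow_natCast]
      norm_num
    rw [e1, e2, e3]
    ring
  rw [hrhs]
  calc (multipartitions (2^a) w : ℝ) ≤ (Kb (2^a) w : ℝ) := hM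
    _ ≤ 4*((2^a : ℕ):ℝ)^w / 2.5199^w := by
        rw [le_div_iff₀ (by positivity)]
        linarith [key]
    _ ≤ 4 * ((2^a : ℕ):ℝ)^w / ((2:ℝ)^((4:ℝ)/3))^w := by
        apply div_le_div_of_nonneg_left (by positivity) (by positivity)
        exact pow_le_pow_left₀ hb0.le hc w
end

section
/- For every integer w ≥ 0, the number of binary decompositions of w satisfies p₂(w) ≤ 2^(w/3 + 1). -/
def S2 (l : List ℕ) : ℕ := ∑ i : Fin l.length, l.get i * 2 ^ (i : ℕ)

lemma S2_nil : S2 [] = 0 := rfl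

lemma S2_cons (a : ℕ) (t : List ℕ) : S2 (a :: t) = a + 2 * S2 t := by
  simp [S2, Fin.sum_univ_succ, Finset.mul_sum, pow_succ]
  ring_nf

/-- `l` is an `ℓ`-decomposition of `w`: a tuple `(t₀, …, t_k)` of nonnegative integers with
`∑ tᵢ · ℓ^i = w` and last entry nonzero (the empty tuple is the decomposition of `0`). -/
def IsDecomp (ℓ w : ℕ) (l : List ℕ) : Prop :=
  (∑ i : Fin l.length, l.get i * ℓ ^ (i : ℕ)) = w ∧ l.getLast? ≠ some 0

lemma isDecomp_iff (w : ℕ) (l : List ℕ) :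
    IsDecomp 2 w l ↔ S2 l = w ∧ l.getLast? ≠ some 0 := Iff.rfl

lemma getLast?_cons' (a : ℕ) (t : List ℕ) (ht : t ≠ []) :
    (a :: t).getLast? = t.getLast? := by
  cases t with
  | nil => exact absurd rfl ht
  | cons b u => rfl

lemma S2_pos (l : List ℕ) : l ≠ [] → l.getLast? ≠ some 0 → 0 < S2 l := by
  induction l with
  | nil => intro h; exact absurd rfl h
  | cons a t ih =>
    intro _ h
    cases t with
    | nil =>
      simp only [List.getLast?_singleton] at h
      have : a ≠ 0 := fun h' => h (by rw [h'])
      rw [S2_cons, S2_nil]; omega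
    | cons b u =>
      have := ih (by simp) (by rwa [getLast?_cons' a _ (by simp)] at h)
      rw [S2_cons]; omega

lemma decomp_ne_nil {w : ℕ} (hw : w ≠ 0) {l : List ℕ} (h : IsDecomp 2 w l) : l ≠ [] := by
  intro h'
  subst h'
  exact hw (((isDecomp_iff w []).mp h).1.symm.trans S2_nil)

lemma tail_decomp {w : ℕ} {a : ℕ} {t : List ℕ} (ht : t ≠ [])
    (h : IsDecomp 2 w (a :: t)) :
    IsDecomp 2 (S2 t) t ∧ 1 ≤ S2 t ∧ S2 t ≤ w / 2 := by
  rw [isDecomp_iff] at h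
  obtain ⟨hs, hl⟩ := h
  rw [getLast?_cons' a t ht] at hl
  have hpos := S2_pos t ht hl
  rw [S2_cons] at hs
  refine ⟨⟨rfl, hl⟩, hpos, ?_⟩
  omega

noncomputable def decompFun (w : ℕ) (hw : w ≠ 0) :
    Option ((m : Finset.Icc 1 (w / 2)) × {l : List ℕ // IsDecomp 2 (m : ℕ) l}) →
    {l : List ℕ // IsDecomp 2 w l}
  | none => ⟨[w], by
      refine ⟨?_, ?_⟩
      · show S2 [w] = w
        rw [show [w] = w :: ([] : List ℕ) from rfl, S2_cons, S2_nil]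
        omega
      · rw [List.getLast?_singleton]
        simpa using hw⟩
  | some ⟨m, t, ht⟩ => ⟨(w - 2 * (m : ℕ)) :: t, by
      obtain ⟨hm1, hm2⟩ := Finset.mem_Icc.mp m.2
      rw [isDecomp_iff] at ht
      obtain ⟨hs, hl⟩ := ht
      have htne : t ≠ [] := by
        intro h'
        rw [h', S2_nil] at hs
        have : (⟨(m : ℕ), m.2⟩ : {x // x ∈ Finset.Icc 1 (w / 2)}) = m := rfl
        omega
      have h2m : 2 * (m : ℕ) ≤ w := by
        have := Nat.div_mul_le_self w 2
        omega
      refine ⟨?_, ?_⟩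
      · show S2 _ = w
        rw [S2_cons, hs]
        omega
      · rw [getLast?_cons' _ t htne]
        exact hl⟩

lemma decompFun_bijective (w : ℕ) (hw : w ≠ 0) : Function.Bijective (decompFun w hw) := by
  constructor
  · rintro (_ | ⟨⟨m, hm⟩, ⟨t, ht⟩⟩) (_ | ⟨⟨m', hm'⟩, ⟨t', ht'⟩⟩) h <;>
      simp only [decompFun, Subtype.mk.injEq, List.cons.injEq] at h
    · rfl
    · exfalso
      obtain ⟨_, h2⟩ := List.cons.inj (congrArg Subtype.val h)
      have : t' ≠ [] := by
        have hs : S2 t' = m' := ((isDecomp_iff _ t').mp ht').1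
        intro h'
        rw [h', S2_nil] at hs
        have := (Finset.mem_Icc.mp hm').1
        omega
      exact this h2.symm
    · exfalso
      obtain ⟨_, h2⟩ := List.cons.inj (congrArg Subtype.val h)
      have : t ≠ [] := by
        have hs : S2 t = m := ((isDecomp_iff _ t).mp ht).1
        intro h'
        rw [h', S2_nil] at hs
        have := (Finset.mem_Icc.mp hm).1
        omega
      exact this h2
    · obtain ⟨-, h2⟩ := h
      subst h2
      have hmm : m = m' := by
        have h1 : S2 t = m := ((isDecomp_iff _ t).mp ht).1
        have h2 : S2 t = m' := ((isDecomp_iff _ t).mp ht').1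
        omega
      subst hmm
      rfl
  · rintro ⟨l, hl⟩
    cases l with
    | nil => exact absurd rfl (decomp_ne_nil hw hl)
    | cons a t =>
      cases t with
      | nil =>
        refine ⟨none, ?_⟩
        have : a = w := by
          have := ((isDecomp_iff _ _).mp hl).1
          rw [S2_cons, S2_nil] at this
          omega
        subst this
        rfl
      | cons b u =>
        obtain ⟨htd, hm1, hm2⟩ := tail_decomp (by simp) hl
        refine ⟨some ⟨⟨S2 (b :: u), Finset.mem_Icc.mpr ⟨hm1, hm2⟩⟩, ⟨b :: u, htd⟩⟩, ?_⟩
        simp only [decompFun, Subtype.mk.injEq, List.cons.injEq, and_true]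
        refine ?_
        have := ((isDecomp_iff _ _).mp hl).1
        rw [S2_cons] at this
        omega

def F : ℕ → ℕ
  | w => 1 + ∑ m ∈ (Finset.Icc 1 (w / 2)).attach, F m.1
decreasing_by
  rcases Finset.mem_Icc.mp m.2 with ⟨h1, h2⟩
  omega

lemma F_eq (w : ℕ) : F w = 1 + ∑ m ∈ Finset.Icc 1 (w / 2), F m := by
  rw [F]
  congr 1
  exact Finset.sum_attach _ _

lemma F_pos (w : ℕ) : 0 < F w := by rw [F_eq]; omega

lemma F_mono : Monotone F := by
  intro a b hab
  rw [F_eq a, F_eq b]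
  have h : Finset.Icc 1 (a / 2) ⊆ Finset.Icc 1 (b / 2) := by
    apply Finset.Icc_subset_Icc le_rfl (Nat.div_le_div_right hab)
  exact Nat.add_le_add le_rfl (Finset.sum_le_sum_of_subset h)

lemma F_odd (k : ℕ) : F (2 * k + 1) = F (2 * k) := by
  rw [F_eq, F_eq]
  have : (2 * k + 1) / 2 = 2 * k / 2 := by omega
  rw [this]

lemma F_even (k : ℕ) (hk : 1 ≤ k) : F (2 * k) = F (2 * k - 1) + F k := by
  rw [F_eq (2 * k), F_eq (2 * k - 1)]
  have h1 : 2 * k / 2 = k := by omega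
  have h2 : (2 * k - 1) / 2 = k - 1 := by omega
  rw [h1, h2]
  have : Finset.Icc 1 k = insert k (Finset.Icc 1 (k - 1)) := by
    ext x; simp [Finset.mem_Icc, Finset.mem_insert]; omega
  rw [this, Finset.sum_insert (by simp [Finset.mem_Icc]; omega)]
  ring

lemma F_le (k : ℕ) : F (2 * k) ≤ (k + 1) * F k := by
  rw [F_eq (2 * k)]
  have h1 : 2 * k / 2 = k := by omega
  rw [h1]
  have : ∑ m ∈ Finset.Icc 1 k, F m ≤ ∑ m ∈ Finset.Icc 1 k, F k := by
    apply Finset.sum_le_sum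
    intro i hi
    exact F_mono (Finset.mem_Icc.mp hi).2
  have hcard : (Finset.Icc 1 k).card = k := by simp
  calc 1 + ∑ m ∈ Finset.Icc 1 k, F m ≤ 1 + k * F k := by
        rw [Finset.sum_const, hcard, smul_eq_mul] at this; omega
    _ ≤ (k + 1) * F k := by have := F_pos k; nlinarith

lemma cube_bound : ∀ k, 11 ≤ k → (k + 1) ^ 3 ≤ 2 ^ k := by
  intro k hk
  induction k with
  | zero => omega
  | succ n ih =>
    rcases Nat.lt_or_ge n 11 with h | h
    · have hn : n = 10 := by omega
      subst hn; norm_num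
    · have h2 : 11 * (n * n) ≤ n * (n * n) := Nat.mul_le_mul_right _ h
      have h3 : 11 * n ≤ n * n := Nat.mul_le_mul_right _ h
      have : (n + 2) ^ 3 ≤ 2 * (n + 1) ^ 3 := by nlinarith
      calc (n + 1 + 1) ^ 3 ≤ 2 * (n + 1) ^ 3 := this
        _ ≤ 2 * 2 ^ n := by have := ih (by omega); omega
        _ = 2 ^ (n + 1) := by ring

lemma F_cube (w : ℕ) : (F w) ^ 3 ≤ 2 ^ (w + 3) := by
  induction w using Nat.strong_induction_on with
  | _ w ih =>
  rcases Nat.even_or_odd w with ⟨k, hk⟩ | ⟨k, hk⟩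
  · subst hk
    rw [show k + k = 2 * k by ring]
    rcases Nat.lt_or_ge k 11 with h | h
    · -- small cases: compute F values
      have f0 : F 0 = 1 := by rw [F_eq]; simp
      have f1 : F 1 = 1 := by rw [F_eq]; simp
      have f2 : F 2 = 2 := by rw [show 2 = 2*1 by rfl, F_even 1 le_rfl]; simp [f1]
      have f3 : F 3 = 2 := by rw [show 3 = 2*1+1 by rfl, F_odd]; simpa using f2
      have f4 : F 4 = 4 := by rw [show 4 = 2*2 by rfl, F_even 2 (by omega)]; simp [f3, f2]
      have f5 : F 5 = 4 := by rw [show 5 = 2*2+1 by rfl, F_odd]; simpa using f4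
      have f6 : F 6 = 6 := by rw [show 6 = 2*3 by rfl, F_even 3 (by omega)]; simp [f5, f3]
      have f7 : F 7 = 6 := by rw [show 7 = 2*3+1 by rfl, F_odd]; simpa using f6
      have f8 : F 8 = 10 := by rw [show 8 = 2*4 by rfl, F_even 4 (by omega)]; simp [f7, f4]
      have f9 : F 9 = 10 := by rw [show 9 = 2*4+1 by rfl, F_odd]; simpa using f8
      have f10 : F 10 = 14 := by rw [show 10 = 2*5 by rfl, F_even 5 (by omega)]; simp [f9, f5]
      have f11 : F 11 = 14 := by rw [show 11 = 2*5+1 by rfl, F_odd]; simpa using f10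
      have f12 : F 12 = 20 := by rw [show 12 = 2*6 by rfl, F_even 6 (by omega)]; simp [f11, f6]
      have f13 : F 13 = 20 := by rw [show 13 = 2*6+1 by rfl, F_odd]; simpa using f12
      have f14 : F 14 = 26 := by rw [show 14 = 2*7 by rfl, F_even 7 (by omega)]; simp [f13, f7]
      have f15 : F 15 = 26 := by rw [show 15 = 2*7+1 by rfl, F_odd]; simpa using f14
      have f16 : F 16 = 36 := by rw [show 16 = 2*8 by rfl, F_even 8 (by omega)]; simp [f15, f8]
      have f17 : F 17 = 36 := by rw [show 17 = 2*8+1 by rfl, F_odd]; simpa using f16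
      have f18 : F 18 = 46 := by rw [show 18 = 2*9 by rfl, F_even 9 (by omega)]; simp [f17, f9]
      have f19 : F 19 = 46 := by rw [show 19 = 2*9+1 by rfl, F_odd]; simpa using f18
      have f20 : F 20 = 60 := by rw [show 20 = 2*10 by rfl, F_even 10 (by omega)]; simp [f19, f10]
      interval_cases k <;> simp_all
    · -- large case
      have h1 : F (2 * k) ≤ (k + 1) * F k := F_le k
      have h2 : (F k) ^ 3 ≤ 2 ^ (k + 3) := ih k (by omega)
      have h3 : (k + 1) ^ 3 ≤ 2 ^ k := cube_bound k h
      calc (F (2 * k)) ^ 3 ≤ ((k + 1) * F k) ^ 3 := Nat.pow_le_pow_left h1 3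
        _ = (k + 1) ^ 3 * (F k) ^ 3 := by ring
        _ ≤ 2 ^ k * 2 ^ (k + 3) := Nat.mul_le_mul h3 h2
        _ = 2 ^ (2 * k + 3) := by ring
  · subst hk
    rw [show 2 * k + 1 = 2 * k + 1 by rfl, F_odd]
    calc (F (2 * k)) ^ 3 ≤ 2 ^ (2 * k + 3) := ih (2 * k) (by omega)
      _ ≤ 2 ^ (2 * k + 1 + 3) := Nat.pow_le_pow_right (by norm_num) (by omega)

lemma decomp_zero (l : List ℕ) : IsDecomp 2 0 l ↔ l = [] := by
  constructor
  · intro h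
    by_contra h'
    have h1 := S2_pos l h' ((isDecomp_iff 0 l).mp h).2
    have hs := ((isDecomp_iff 0 l).mp h).1
    omega
  · rintro rfl
    exact (isDecomp_iff 0 []).mpr ⟨S2_nil, by simp⟩

lemma card_decomp : ∀ w : ℕ, Nat.card {l : List ℕ // IsDecomp 2 w l} = F w ∧
    Finite {l : List ℕ // IsDecomp 2 w l} := by
  intro w
  induction w using Nat.strong_induction_on with
  | _ w ih =>
  rcases Nat.eq_zero_or_pos w with rfl | hw
  · haveI : Unique {l : List ℕ // IsDecomp 2 0 l} :=
      { default := ⟨[], (decomp_zero []).mpr rfl⟩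
        uniq := fun a => Subtype.ext ((decomp_zero _).mp a.2) }
    refine ⟨?_, inferInstance⟩
    rw [Nat.card_unique, F_eq]
    simp
  · have hdiv : ∀ m : (Finset.Icc 1 (w / 2) : Finset ℕ), (m : ℕ) < w := fun m => by
      have := Finset.mem_Icc.mp m.2; omega
    haveI hfin : ∀ m : (Finset.Icc 1 (w / 2) : Finset ℕ),
        Finite {l : List ℕ // IsDecomp 2 (m : ℕ) l} := fun m => (ih _ (hdiv m)).2
    haveI hftype : ∀ m : (Finset.Icc 1 (w / 2) : Finset ℕ),
        Fintype {l : List ℕ // IsDecomp 2 (m : ℕ) l} := fun m => Fintype.ofFinite _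
    have hb := decompFun_bijective w (by omega)
    have hcard := Nat.card_eq_of_bijective _ hb
    haveI : Finite {l : List ℕ // IsDecomp 2 w l} := Finite.of_surjective _ hb.2
    refine ⟨?_, inferInstance⟩
    rw [← hcard, Finite.card_option, Nat.card_eq_fintype_card, Fintype.card_sigma]
    have hsum : ∀ m : (Finset.Icc 1 (w / 2) : Finset ℕ),
        Fintype.card {l : List ℕ // IsDecomp 2 (m : ℕ) l} = F (m : ℕ) := fun m => by
      rw [← Nat.card_eq_fintype_card]
      exact (ih _ (hdiv m)).1
    rw [Finset.sum_congr rfl (fun m _ => hsum m)]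
    rw [F_eq w]
    rw [Finset.sum_coe_sort (Finset.Icc 1 (w / 2)) F]
    omega

/-- The number of `ℓ`-decompositions of `w`. -/
noncomputable def numDecomps (ℓ w : ℕ) : ℕ :=
  Nat.card {l : List ℕ // IsDecomp ℓ w l}

private theorem final_step (c w : ℕ) (h : c ^ 3 ≤ 2 ^ (w + 3)) :
    (c : ℝ) ≤ (2 : ℝ) ^ ((w : ℝ) / 3 + 1) := by
  have hb : (0:ℝ) ≤ 2 := by norm_num
  have key : ((c : ℝ)) ^ (3:ℕ) ≤ ((2:ℝ) ^ ((w:ℝ)/3 + 1)) ^ (3:ℕ) := by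
    have h3 : ((2:ℝ) ^ ((w:ℝ)/3 + 1)) ^ (3:ℕ) = (2:ℝ) ^ ((w:ℝ) + 3) := by
      rw [← Real.rpow_natCast ((2:ℝ) ^ ((w:ℝ)/3+1)) 3, ← Real.rpow_mul hb]
      norm_num
      ring_nf
    rw [h3]
    calc ((c : ℝ))^(3:ℕ) = ((c ^ 3 : ℕ) : ℝ) := by push_cast; ring
      _ ≤ ((2 ^ (w+3) : ℕ) : ℝ) := by exact_mod_cast h
      _ = (2:ℝ) ^ ((w:ℝ)+3) := by
          rw [show ((2 ^ (w+3) : ℕ) : ℝ) = (2:ℝ) ^ (((w+3 : ℕ)) : ℝ) by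
            rw [Real.rpow_natCast]; push_cast; ring]
          push_cast
          ring_nf
  exact le_of_pow_le_pow_left₀ (by norm_num) (Real.rpow_nonneg hb _) key

theorem numDecomps_two_le (w : ℕ) :
    (numDecomps 2 w : ℝ) ≤ (2 : ℝ) ^ ((w : ℝ) / 3 + 1) := by
  have h1 : numDecomps 2 w = F w := (card_decomp w).1
  rw [h1]
  exact final_step (F w) w (F_cube w)
end
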